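/- Over the boolean semiring 𝔹 = ({0,1}, max, min), the congruence on A* generated by the single relation a ≡ 1 (erasing a letter a) is 𝔹-shuffle compatible: the unshuffle coproduct c on 𝔹⟨A⟩ descends to the quotient 𝔹[A*/≡]. However, over any semiring K with 1 + 1 ≠ 1, the congruence a ≡ 1 is not K-shuffle compatible. -/

import Mathlib

/-- The boolean semiring `𝔹 = ({0,1}, max, min)`, realized as `Bool` with `+ = or`
(max) and `* = and` (min). -/
instance boolCommSemiring : CommSemiring Bool where
  add := or
  zero := false
  add_assoc := by decide
  zero_add := by decide
  add_zero := by decide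
  add_comm := by decide
  nsmul := fun n b => if n = 0 then false else b
  nsmul_zero := by intro b; rfl
  nsmul_succ := by
    intro n b
    show (if n + 1 = 0 then false else b) = ((if n = 0 then false else b) || b)
    cases b <;> by_cases h : n = 0 <;> simp [h]
  natCast := fun n => if n = 0 then false else true
  natCast_zero := rfl
  natCast_succ := by intro n; cases n <;> simp [Nat.succ_ne_zero] <;> rfl
  mul := and
  one := true
  mul_assoc := by decide
  one_mul := by decide
  mul_one := by decide
  left_distrib := by decide
  right_distrib := by decide
  zero_mul := by decide
  mul_zero := by decide
  mul_comm := by decide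

open TensorProduct

/-- The unshuffle coproduct on the monoid algebra of the free monoid (= `K⟨A⟩`):
the unique algebra morphism (for the concatenation product) sending each letter `a`
to `a ⊗ 1 + 1 ⊗ a`. -/
noncomputable def unshuffle (K A : Type*) [CommSemiring K] :
    MonoidAlgebra K (FreeMonoid A) →ₐ[K]
      MonoidAlgebra K (FreeMonoid A) ⊗[K] MonoidAlgebra K (FreeMonoid A) :=
  MonoidAlgebra.lift K _ (FreeMonoid A)
    (FreeMonoid.lift fun a =>
      (MonoidAlgebra.of K (FreeMonoid A) (FreeMonoid.of a)) ⊗ₜ[K] 1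
        + 1 ⊗ₜ[K] (MonoidAlgebra.of K (FreeMonoid A) (FreeMonoid.of a)))

/-- The word `l` viewed as an element of `K⟨A⟩`. -/
noncomputable def wd {K : Type*} {A : Type*} [CommSemiring K] (l : List A) :
    MonoidAlgebra K (FreeMonoid A) :=
  MonoidAlgebra.of K (FreeMonoid A) (FreeMonoid.ofList l)

/-- `P` is primitive for the unshuffle coproduct: `c(P) = P ⊗ 1 + 1 ⊗ P`. -/
def IsPrimitive {K A : Type*} [CommSemiring K] (P : MonoidAlgebra K (FreeMonoid A)) : Prop :=
  unshuffle K A P = P ⊗ₜ[K] 1 + 1 ⊗ₜ[K] P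

/-- The natural algebra morphism `K⟨A⟩ → K[A*/≡]` induced by a monoid congruence. -/
noncomputable def natHom (K : Type*) {A : Type*} [CommSemiring K] (c : Con (FreeMonoid A)) :
    MonoidAlgebra K (FreeMonoid A) →ₐ[K] MonoidAlgebra K c.Quotient :=
  MonoidAlgebra.mapDomainAlgHom K K c.mk'

/-- A congruence `≡` on `A*` is `K`-shuffle compatible if the unshuffle coproduct descends
to the quotient, i.e. `u ≡ v` implies `(nat ⊗ nat)(c u) = (nat ⊗ nat)(c v)`. -/
def ShuffleCompat (K : Type*) {A : Type*} [CommSemiring K] (c : Con (FreeMonoid A)) : Prop :=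
  ∀ u v : FreeMonoid A, c u v →
    (Algebra.TensorProduct.map (natHom K c) (natHom K c))
        (unshuffle K A (MonoidAlgebra.of K (FreeMonoid A) u))
      = (Algebra.TensorProduct.map (natHom K c) (natHom K c))
        (unshuffle K A (MonoidAlgebra.of K (FreeMonoid A) v))


section Aux

open TensorProduct

variable {A : Type*} (a : A) (K : Type*) [CommSemiring K]

/-- The composite `A* → K⟨A⟩ → K⟨A⟩⊗K⟨A⟩ → K[A*/≡]⊗K[A*/≡]` as a monoid hom. -/
noncomputable def psi (c : Con (FreeMonoid A)) :
    FreeMonoid A →* (MonoidAlgebra K c.Quotient ⊗[K] MonoidAlgebra K c.Quotient) :=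
  ((Algebra.TensorProduct.map (natHom K c) (natHom K c)).toMonoidHom.comp
    (unshuffle K A).toMonoidHom).comp (MonoidAlgebra.of K (FreeMonoid A))

lemma psi_apply (c : Con (FreeMonoid A)) (u : FreeMonoid A) :
    psi K c u = (Algebra.TensorProduct.map (natHom K c) (natHom K c))
        (unshuffle K A (MonoidAlgebra.of K (FreeMonoid A) u)) := rfl

lemma natHom_of (c : Con (FreeMonoid A)) (g : FreeMonoid A) :
    natHom K c (MonoidAlgebra.of K (FreeMonoid A) g)
      = MonoidAlgebra.of K c.Quotient (c.mk' g) := by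
  simp [natHom, MonoidAlgebra.of_apply, MonoidAlgebra.mapDomainAlgHom,
    Finsupp.mapDomain_single]

lemma psi_of (c : Con (FreeMonoid A)) (b : A) :
    psi K c (FreeMonoid.of b) =
      (MonoidAlgebra.of K c.Quotient (c.mk' (FreeMonoid.of b))) ⊗ₜ[K] 1
        + 1 ⊗ₜ[K] (MonoidAlgebra.of K c.Quotient (c.mk' (FreeMonoid.of b))) := by
  show (Algebra.TensorProduct.map (natHom K c) (natHom K c))
      (unshuffle K A (MonoidAlgebra.of K (FreeMonoid A) (FreeMonoid.of b))) = _
  rw [unshuffle, MonoidAlgebra.lift_of, FreeMonoid.lift_eval_of, map_add,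
    Algebra.TensorProduct.map_tmul, Algebra.TensorProduct.map_tmul,
    natHom_of, map_one]

lemma psi_of_a_eq :
    psi K (conGen (fun x y : FreeMonoid A => x = FreeMonoid.of a ∧ y = 1)) (FreeMonoid.of a)
      = (1 : MonoidAlgebra K (conGen (fun x y : FreeMonoid A => x = FreeMonoid.of a ∧ y = 1)).Quotient
            ⊗[K] MonoidAlgebra K (conGen (fun x y : FreeMonoid A => x = FreeMonoid.of a ∧ y = 1)).Quotient)
          + 1 := by
  set c := conGen (fun x y : FreeMonoid A => x = FreeMonoid.of a ∧ y = 1) with hc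
  have h : c.mk' (FreeMonoid.of a) = c.mk' 1 := by
    rw [← Con.ker_rel c.mk', Con.mk'_ker, hc]
    exact ConGen.Rel.of _ _ ⟨rfl, rfl⟩
  rw [psi_of, h]
  simp [Algebra.TensorProduct.one_def, ← MonoidAlgebra.one_def]

end Aux

theorem erasing_relation_boolean_compatible_only {A : Type*} (a : A)
    {K : Type*} [CommSemiring K] (hK : (1 : K) + 1 ≠ 1) :
    ShuffleCompat Bool
        (conGen (fun x y : FreeMonoid A => x = FreeMonoid.of a ∧ y = 1)) ∧
      ¬ ShuffleCompat K
        (conGen (fun x y : FreeMonoid A => x = FreeMonoid.of a ∧ y = 1)) := by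
  set c := conGen (fun x y : FreeMonoid A => x = FreeMonoid.of a ∧ y = 1) with hc
  constructor
  · intro u v huv
    rw [← psi_apply, ← psi_apply]
    have hle : c ≤ Con.ker (psi Bool c) := by
      rw [hc]
      apply Con.conGen_le.2
      rintro x y ⟨rfl, rfl⟩
      rw [Con.ker_rel, map_one]
      have h2 := psi_of_a_eq a Bool (A := A)
      rw [← hc] at h2
      rw [h2, Algebra.TensorProduct.one_def, ← TensorProduct.add_tmul,
        MonoidAlgebra.one_def, ← MonoidAlgebra.single_add]
      rfl
    exact (Con.ker_rel (psi Bool c)).1 (hle huv)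
  · intro H
    have h := H (FreeMonoid.of a) 1 (ConGen.Rel.of _ _ ⟨rfl, rfl⟩)
    rw [← psi_apply, ← psi_apply, map_one] at h
    have h2 := psi_of_a_eq a K (A := A)
    rw [← hc] at h2
    rw [h2] at h
    set Q := c.Quotient with hQ
    apply hK
    have h3 : (finsuppTensorFinsupp' K Q Q) (TensorProduct.map (MonoidAlgebra.coeffLinearEquiv K).toLinearMap (MonoidAlgebra.coeffLinearEquiv K).toLinearMap
          ((1 : MonoidAlgebra K Q) ⊗ₜ[K] (1 : MonoidAlgebra K Q)
            + (1 : MonoidAlgebra K Q) ⊗ₜ[K] (1 : MonoidAlgebra K Q)))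
        = (finsuppTensorFinsupp' K Q Q) (TensorProduct.map (MonoidAlgebra.coeffLinearEquiv K).toLinearMap (MonoidAlgebra.coeffLinearEquiv K).toLinearMap ((1 : MonoidAlgebra K Q) ⊗ₜ[K] (1 : MonoidAlgebra K Q))) := by
      rw [← Algebra.TensorProduct.one_def, h]
    have e1 : (finsuppTensorFinsupp' K Q Q) (TensorProduct.map (MonoidAlgebra.coeffLinearEquiv K).toLinearMap (MonoidAlgebra.coeffLinearEquiv K).toLinearMap ((1 : MonoidAlgebra K Q) ⊗ₜ[K] (1 : MonoidAlgebra K Q)))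
        = Finsupp.single ((1 : Q), (1 : Q)) (1 : K) := by
      rw [TensorProduct.map_tmul]
      simp [MonoidAlgebra.one_def, MonoidAlgebra.coeffLinearEquiv, finsuppTensorFinsupp'_single_tmul_single]
    rw [map_add, LinearEquiv.map_add, e1] at h3
    have h4 := DFunLike.congr_fun h3 ((1 : Q), (1 : Q))
    simpa using h4
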